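/- Monotonicity of radius in approach angle: for fixed (x,y) and angles 0 < θ₂ < θ₁ < 2π such that both R(x,y,θ₁) and R(x,y,θ₂) are defined and both correspond to valid tangent approaches with positive straight-segment distance, R(x,y,θ) = (x sin θ − y cos θ)/(1 − cos θ) is strictly increasing; in particular θ₁ > θ₂ > 0 implies R(x,y,θ₁) > R(x,y,θ₂), under the assumption that both angles lie in the feasible range (θ_m/2, θ_m] where θ_m = 2·atan2(y,x) > 0. -/

import Mathlib

open Real

/-- Two-argument arctangent: the angle of the point `(x, y)` in the plane. -/
noncomputable def atan2 (y x : ℝ) : ℝ := Complex.arg ⟨x, y⟩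

/-- The turn radius `R(x,y,θ) = (x sin θ − y cos θ)/(1 − cos θ)` required to reach
`(x,y)` with final heading `θ`. -/
noncomputable def Rrad (x y θ : ℝ) : ℝ :=
  (x * Real.sin θ - y * Real.cos θ) / (1 - Real.cos θ)

lemma Rrad_eq (x y θ : ℝ) (hs : Real.sin (θ/2) ≠ 0) :
    Rrad x y θ = -(y/2) * (Real.cos (θ/2) / Real.sin (θ/2))^2
      + x * (Real.cos (θ/2) / Real.sin (θ/2)) + y/2 := by
  have hθ : θ = 2 * (θ/2) := by ring
  have hsin : Real.sin θ = 2 * Real.sin (θ/2) * Real.cos (θ/2) := by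
    rw [hθ, Real.sin_two_mul]; ring
  have hcos : Real.cos θ = 1 - 2 * Real.sin (θ/2)^2 := by
    have h := Real.cos_two_mul (θ/2)
    have hpy := Real.sin_sq_add_cos_sq (θ/2)
    rw [← hθ] at h
    linarith
  rw [Rrad, hsin, hcos]
  have h2 : Real.sin (θ/2)^2 ≠ 0 := pow_ne_zero _ hs
  have hpy := Real.sin_sq_add_cos_sq (θ/2)
  field_simp
  linear_combination (2 * Real.sin (θ/2)^2 * y) * hpy

/-- Monotonicity of radius in approach angle: for `y > 0` and feasible approach
angles `θ_m/2 < θ₂ < θ₁ ≤ θ_m` (where `θ_m = 2·atan2(y,x) > 0`), the required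
radius is strictly increasing: `R(x,y,θ₁) > R(x,y,θ₂)`. -/
theorem radius_monotone (x y θ₁ θ₂ : ℝ) (hy : 0 < y)
    (hθm : 0 < 2 * atan2 y x)
    (h1 : 2 * atan2 y x / 2 < θ₂) (h2 : θ₂ < θ₁) (h3 : θ₁ ≤ 2 * atan2 y x) :
    Rrad x y θ₁ > Rrad x y θ₂ := by
  set φ := atan2 y x with hφdef
  have hφ0 : 0 < φ := by linarith
  have hz : (⟨x, y⟩ : ℂ) ≠ 0 := by
    intro h
    have : y = 0 := congrArg Complex.im h
    linarith
  have hr : 0 < ‖(⟨x, y⟩ : ℂ)‖ := norm_pos_iff.mpr hz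
  have hsinφ : Real.sin φ = y / ‖(⟨x, y⟩ : ℂ)‖ := Complex.sin_arg _
  have hcosφ : Real.cos φ = x / ‖(⟨x, y⟩ : ℂ)‖ := Complex.cos_arg hz
  have hsinφpos : 0 < Real.sin φ := by rw [hsinφ]; positivity
  have hφπ : φ < π := by
    rcases lt_or_eq_of_le (Complex.arg_le_pi ⟨x, y⟩) with h | h
    · exact h
    · exfalso
      have := (Complex.arg_eq_pi_iff.mp h).2
      simp at this
      linarith
  -- half angles
  set t₁ := θ₁ / 2
  set t₂ := θ₂ / 2
  have ht₂0 : 0 < t₂ := by simp only [t₂]; linarith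
  have ht₁φ : t₁ ≤ φ := by simp only [t₁]; linarith
  have ht21 : t₂ < t₁ := by simp only [t₁, t₂]; linarith
  have hs₁ : 0 < Real.sin t₁ := Real.sin_pos_of_pos_of_lt_pi (by linarith) (by linarith)
  have hs₂ : 0 < Real.sin t₂ := Real.sin_pos_of_pos_of_lt_pi ht₂0 (by linarith)
  set u₁ := Real.cos t₁ / Real.sin t₁
  set u₂ := Real.cos t₂ / Real.sin t₂
  -- u₂ > u₁
  have hu21 : u₁ < u₂ := by
    rw [div_lt_div_iff₀ hs₁ hs₂]
    have : 0 < Real.sin (t₁ - t₂) :=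
      Real.sin_pos_of_pos_of_lt_pi (by linarith) (by linarith)
    rw [Real.sin_sub] at this
    nlinarith
  -- u₁ ≥ x / y  (cot t₁ ≥ cot φ)
  have hu1 : x / y ≤ u₁ := by
    have hcotφ : Real.cos φ / Real.sin φ = x / y := by
      rw [hsinφ, hcosφ]
      field_simp
    rw [← hcotφ, div_le_div_iff₀ hsinφpos hs₁]
    have : 0 ≤ Real.sin (φ - t₁) :=
      Real.sin_nonneg_of_nonneg_of_le_pi (by linarith) (by linarith)
    rw [Real.sin_sub] at this
    nlinarith
  have hu2 : x / y < u₂ := lt_of_le_of_lt hu1 hu21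
  have hxy1 : x ≤ y * u₁ := by
    rw [div_le_iff₀ hy] at hu1; linarith [hu1]
  have hxy2 : x < y * u₂ := by
    rw [div_lt_iff₀ hy] at hu2; linarith [hu2]
  rw [Rrad_eq x y θ₁ (ne_of_gt hs₁), Rrad_eq x y θ₂ (ne_of_gt hs₂)]
  show -(y/2) * u₁^2 + x * u₁ + y/2 > -(y/2) * u₂^2 + x * u₂ + y/2
  nlinarith [mul_pos (sub_pos.mpr hu21) (sub_pos.mpr hxy2)]
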